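/- Let α be a linear order, S a list over α, and e an element of α with e < a for every symbol a occurring in S. Set T = S ++ [e] and N = T.length. Then for all positions i, j < N with i ≠ j, the circular rotation of T starting at position i is lexicographically strictly smaller than the rotation starting at position j if and only if the suffix starting at i is lexicographically strictly smaller than the suffix starting at j: List.Lex (· < ·) (T.rotate i) (T.rotate j) ↔ List.Lex (· < ·) (T.drop i) (T.drop j). -/

import Mathlib

private lemma lex_cons_ne {α : Type*} [LinearOrder α] {a b : α} (hab : a ≠ b)
    (x y : List α) : List.Lex (· < ·) (a :: x) (b :: y) ↔ a < b := by
  constructor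
  · intro h
    cases h with
    | cons h => exact absurd rfl hab
    | rel h => exact h
  · exact fun h => List.Lex.rel h

private lemma lex_append_iff {α : Type*} [LinearOrder α] :
    ∀ (k : ℕ) (l₁ l₂ s₁ s₂ : List α) (h₁ : k < l₁.length) (h₂ : k < l₂.length),
    l₁[k] ≠ l₂[k] →
    (List.Lex (· < ·) (l₁ ++ s₁) (l₂ ++ s₂) ↔ List.Lex (· < ·) l₁ l₂) := by
  intro k
  induction k with
  | zero =>
    rintro (_ | ⟨a, t₁⟩) (_ | ⟨b, t₂⟩) s₁ s₂ h₁ h₂ hne <;> simp at h₁ h₂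
    simp only [List.getElem_cons_zero] at hne
    simp only [List.cons_append]
    rw [lex_cons_ne hne, lex_cons_ne hne]
  | succ k ih =>
    rintro (_ | ⟨a, t₁⟩) (_ | ⟨b, t₂⟩) s₁ s₂ h₁ h₂ hne <;> simp at h₁ h₂
    simp only [List.getElem_cons_succ] at hne
    by_cases hab : a = b
    · subst hab
      simp only [List.cons_append, List.lex_cons_iff]
      exact ih t₁ t₂ s₁ s₂ (by simpa using h₁) (by simpa using h₂) hne
    · simp only [List.cons_append]
      rw [lex_cons_ne hab, lex_cons_ne hab]

/-- For a text `T = S ++ [e]` ending with an endmarker `e` strictly smaller than every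
symbol of `S`, comparing circular rotations of `T` lexicographically is the same as
comparing the corresponding suffixes of `T`. -/
theorem rotate_lex_iff_drop_lex {α : Type*} [LinearOrder α] (S : List α) (e : α)
    (he : ∀ a ∈ S, e < a) (i j : ℕ)
    (hi : i < (S ++ [e]).length) (hj : j < (S ++ [e]).length) (hij : i ≠ j) :
    (List.Lex (· < ·) ((S ++ [e]).rotate i) ((S ++ [e]).rotate j) ↔
      List.Lex (· < ·) ((S ++ [e]).drop i) ((S ++ [e]).drop j)) := by
  set T := S ++ [e] with hT
  have hN : T.length = S.length + 1 := by simp [hT]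
  -- the element at position n < S.length belongs to S, and T[S.length] = e
  have hget_lt : ∀ (n : ℕ) (hn : n < T.length), n < S.length → e < T[n] := by
    intro n hn hnS
    have : T[n] = S[n] := List.getElem_append_left hnS
    rw [this]
    exact he _ (List.getElem_mem hnS)
  have hget_e : ∀ (hn : S.length < T.length), T[S.length] = e := by
    intro hn
    rw [show T[S.length] = (S ++ [e])[S.length] from rfl,
       List.getElem_append_right (le_refl _)]
    simp
  -- witness index
  set m := max i j with hm
  have hmN : m < T.length := by
    rcases max_choice i j with h | h <;> rw [hm, h] <;> [exact hi; exact hj]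
  set k := S.length - m with hk
  have hik : k < (T.drop i).length := by
    rw [List.length_drop]
    omega
  have hjk : k < (T.drop j).length := by
    rw [List.length_drop]
    omega
  have hne : (T.drop i)[k] ≠ (T.drop j)[k] := by
    rw [List.getElem_drop, List.getElem_drop]
    rcases lt_or_gt_of_ne hij with h | h
    · have hjm : j = m := by omega
      have hjk' : j + k = S.length := by omega
      have h1 : e < T[i + k] := hget_lt _ (by omega) (by omega)
      have h2 : T[j + k] = e := by
        have := hget_e (by omega)
        simp_rw [hjk']
        exact this
      rw [h2]
      exact ne_of_gt h1
    · have him : i = m := by omega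
      have hik' : i + k = S.length := by omega
      have h1 : e < T[j + k] := hget_lt _ (by omega) (by omega)
      have h2 : T[i + k] = e := by
        have := hget_e (by omega)
        simp_rw [hik']
        exact this
      rw [h2]
      exact ne_of_lt h1
  rw [List.rotate_eq_drop_append_take (le_of_lt hi),
      List.rotate_eq_drop_append_take (le_of_lt hj)]
  exact lex_append_iff k _ _ _ _ hik hjk hne
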